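/- Let ε ∈ (0,1), γ ≥ 1, and suppose for all t the estimates satisfy |f_t − a_t| ≤ β_t and |g_t − b_t| ≤ β_t with a_t − b_t not in (−ε, ε), where β_t is nonincreasing and 2(γ+1)β_t ≤ ε for all t > T̄. If the decision indicator is I_t = 1 precisely when f_t − g_t < 2γβ_t, then ∑_{t=1}^T I_t ≤ T̄ whenever f_t ≥ g_t for all t (i.e., f_t is the maximal estimate). -/
import Mathlib


theorem label_complexity_bound (T Tbar : ℕ) (ε γ : ℝ)
    (f g a b β : ℕ → ℝ)
    (hε : ε ∈ Set.Ioo (0:ℝ) 1) (hγ : 1 ≤ γ)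
    (hfa : ∀ t, |f t - a t| ≤ β t) (hgb : ∀ t, |g t - b t| ≤ β t)
    (hmargin : ∀ t, a t - b t ∉ Set.Ioo (-ε) ε)
    (hβ : Antitone β)
    (hsmall : ∀ t, Tbar < t → 2 * (γ + 1) * β t ≤ ε)
    (hfg : ∀ t, g t ≤ f t) :
    ∑ t ∈ Finset.Icc 1 T, (if f t - g t < 2 * γ * β t then 1 else 0) ≤ Tbar := by
  have key : ∀ t, Tbar < t → ¬ (f t - g t < 2 * γ * β t) := by
    intro t ht
    have hβ0 : 0 ≤ β t := le_trans (abs_nonneg _) (hfa t)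
    have hfa' := abs_le.1 (hfa t)
    have hgb' := abs_le.1 (hgb t)
    have hsm := hsmall t ht
    have hε0 := hε.1
    have hcase : a t - b t ≤ -ε ∨ ε ≤ a t - b t := by
      have := hmargin t
      simp [Set.mem_Ioo] at this
      by_contra h
      push_neg at h
      exact absurd (this (by linarith [h.1])) (by linarith [h.2])
    rcases hcase with h | h
    · -- f t - g t ≤ a t - b t + 2 β t ≤ -ε + 2β t < 0, contradiction with f ≥ g
      have : f t - g t ≤ -ε + 2 * β t := by
        have := hfa'.2; have := hgb'.1; linarith
      have h2β : 2 * β t < ε := by nlinarith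
      linarith [hfg t]
    · intro hlt
      have : ε - 2 * β t ≤ f t - g t := by
        have := hfa'.1; have := hgb'.2; linarith
      nlinarith
  calc ∑ t ∈ Finset.Icc 1 T, (if f t - g t < 2 * γ * β t then 1 else 0)
      ≤ ∑ t ∈ Finset.Icc 1 T, (if t ≤ Tbar then 1 else 0) := by
        apply Finset.sum_le_sum
        intro t _
        by_cases h : t ≤ Tbar
        · simp [h]; split <;> simp
        · push_neg at h
          simp [key t h, Nat.not_le.2 h]
    _ = ((Finset.Icc 1 T).filter (· ≤ Tbar)).card := by
        rw [Finset.sum_ite, Finset.sum_const, Finset.sum_const]; simp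
    _ ≤ (Finset.Icc 1 Tbar).card := by
        apply Finset.card_le_card
        intro t ht
        simp only [Finset.mem_filter, Finset.mem_Icc] at *
        exact ⟨ht.1.1, ht.2⟩
    _ = Tbar := by simp
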